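/- arXiv:1210.8245 — 4 statements merged into one kernel-verified Lean document; each statement's English description precedes it below -/
import Mathlib

section
/- There is no sequence (pₖ)_{k≥0} of nonnegative reals with Σ pₖ < ∞, not all zero beyond constant, such that the function C̃(δ) = p₀ + Σ_{k≥1} pₖ cos(2kπδ) satisfies C̃(t−s) − C̃(s)C̃(t)/C̃(0) = min(s,t)(1 − max(s,t)) for all s,t ∈ [0,1]. That is, the Brownian bridge is not the zero-conditioning of any 1-periodic stationary Gaussian process. -/
open Real

/-- The Brownian bridge is not the zero-conditioning of a 1-periodic stationary
Gaussian process: no nonnegative summable sequence `(pₖ)` with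
`C̃(δ) = p₀ + Σ_{k≥1} pₖ cos(2kπδ)`, `C̃(0) > 0`, satisfies
`C̃(t-s) - C̃(s)C̃(t)/C̃(0) = min(s,t)(1-max(s,t))` on `[0,1]²`. -/
theorem brownian_bridge_not_in_H0 :
    ¬ ∃ p : ℕ → ℝ, (∀ k, 0 ≤ p k) ∧ Summable p ∧
      (fun δ : ℝ => p 0 + ∑' k : ℕ, p (k + 1) * Real.cos (2 * (k + 1) * Real.pi * δ)) 0 > 0 ∧
      ∀ s ∈ Set.Icc (0:ℝ) 1, ∀ t ∈ Set.Icc (0:ℝ) 1,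
        (fun δ : ℝ => p 0 + ∑' k : ℕ, p (k + 1) * Real.cos (2 * (k + 1) * Real.pi * δ)) (t - s)
          - (fun δ : ℝ => p 0 + ∑' k : ℕ, p (k + 1) * Real.cos (2 * (k + 1) * Real.pi * δ)) s
            * (fun δ : ℝ => p 0 + ∑' k : ℕ, p (k + 1) * Real.cos (2 * (k + 1) * Real.pi * δ)) t
            / (fun δ : ℝ => p 0 + ∑' k : ℕ, p (k + 1) * Real.cos (2 * (k + 1) * Real.pi * δ)) 0
          = min s t * (1 - max s t) := by
  rintro ⟨p, hp, hsum, hC0, hR⟩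
  set C : ℝ → ℝ :=
    fun δ : ℝ => p 0 + ∑' k : ℕ, p (k + 1) * Real.cos (2 * (k + 1) * Real.pi * δ) with hC
  -- C(3/4) = C(1/4)
  have h34 : C (3/4) = C (1/4) := by
    simp only [hC]
    congr 1
    refine tsum_congr fun k => ?_
    congr 1
    have : (2 : ℝ) * (k + 1) * Real.pi * (3/4)
        = (k + 1 : ℕ) * (2 * Real.pi) - 2 * (k + 1) * Real.pi * (1/4) := by
      push_cast; ring
    rw [this, Real.cos_nat_mul_two_pi_sub]
  have mem14 : (1/4 : ℝ) ∈ Set.Icc (0:ℝ) 1 := by norm_num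
  have mem34 : (3/4 : ℝ) ∈ Set.Icc (0:ℝ) 1 := by norm_num
  have mem12 : (1/2 : ℝ) ∈ Set.Icc (0:ℝ) 1 := by norm_num
  have e1 := hR (1/4) mem14 (1/4) mem14
  have e2 := hR (1/4) mem14 (3/4) mem34
  have e3 := hR (1/2) mem12 (1/2) mem12
  norm_num at e1 e2 e3
  rw [h34] at e2
  have ha : C 0 ≠ 0 := ne_of_gt hC0
  have hac : C 0 - C (1/2) = 1/8 := by
    field_simp at e1 e2
    have key : C 0 * ((C 0 - C (1/2)) * 8 - 1) = 0 := by linear_combination e1/2 - e2/2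
    rcases mul_eq_zero.1 key with h | h
    · exact absurd h ha
    · linarith
  field_simp at e3
  nlinarith [e3, hac, hC0]
end

section
/- Let (pₖ)_{k≥0} be nonnegative with Σₖ pₖ = 1 and set C̃(δ) = p₀ + Σ_{k≥1} pₖ cos(kπδ) for δ ∈ [0,2]. If R(s,t) := C̃(t−s) − C̃(s)C̃(t)/C̃(0) satisfies R(s,1) = 0 for all s ∈ [0,2], then for every m ≥ 0 either p_{2m} = 0 or Σ_{k≥0} p_{2k+1} = 0; hence either all even-index or all odd-index coefficients vanish. -/
open Real

lemma cos_nat_pi (n : ℕ) : Real.cos (n * Real.pi) = (-1) ^ n := by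
  simpa using Real.cos_nat_mul_pi_sub 0 n

/-- If a 2-periodic covariogram `C̃(δ) = p₀ + Σ_{k≥1} pₖ cos(kπδ)` with `pₖ ≥ 0`,
`Σ pₖ = 1`, yields a conditioned covariance with `R(s,1) = 0` for all `s ∈ [0,2]`,
then either all even-index or all odd-index coefficients vanish. -/
theorem extension_is_periodic_or_antiperiodic
    (p : ℕ → ℝ) (hp : ∀ k, 0 ≤ p k) (hsum : HasSum p 1)
    (C : ℝ → ℝ)
    (hC : ∀ δ : ℝ, C δ = p 0 + ∑' k : ℕ, p (k + 1) * Real.cos ((k + 1) * Real.pi * δ))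
    (hR : ∀ s ∈ Set.Icc (0:ℝ) 2, C (1 - s) - C s * C 1 / C 0 = 0) :
    (∀ m : ℕ, p (2 * m) = 0) ∨ (∀ k : ℕ, p (2 * k + 1) = 0) := by
  set q : ℕ → ℝ := fun k => p k * (-1) ^ k with hqdef
  have hqsumm : Summable q := by
    refine Summable.of_abs ?_
    have : (fun k => |q k|) = p := by
      funext k
      simp [hqdef, abs_mul, abs_of_nonneg (hp k)]
    rw [this]; exact hsum.summable
  have hps : HasSum (fun n => p (n + 1)) (1 - p 0) := by
    rw [hasSum_nat_add_iff 1]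
    simpa using hsum
  have hC0 : C 0 = 1 := by
    rw [hC 0]
    have he : (fun k : ℕ => p (k + 1) * Real.cos (((k : ℝ) + 1) * Real.pi * 0)) =
        fun k => p (k + 1) := by
      funext k; simp
    rw [he, hps.tsum_eq]; ring
  have hqshift : Summable (fun n => q (n + 1)) := (summable_nat_add_iff 1).mpr hqsumm
  have hC1 : C 1 = p 0 + ∑' n : ℕ, q (n + 1) := by
    rw [hC 1]
    congr 1
    refine tsum_congr fun k => ?_
    have h1 : ((k : ℝ) + 1) * Real.pi * 1 = ((k + 1 : ℕ) : ℝ) * Real.pi := by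
      push_cast; ring
    rw [h1, cos_nat_pi]
  have hqs : HasSum (fun n => q (n + 1)) (C 1 - p 0) := by
    have h := hqshift.hasSum
    have ht : (∑' n : ℕ, q (n + 1)) = C 1 - p 0 := by rw [hC1]; ring
    rwa [ht] at h
  have hqE : HasSum q (C 1) := by
    rw [hasSum_nat_add_iff 1] at hqs
    have hq0 : q 0 = p 0 := by simp [hqdef]
    simpa [hq0] using hqs
  have hE2 : C 1 * C 1 = 1 := by
    have := hR 1 ⟨by norm_num, by norm_num⟩
    rw [show (1 : ℝ) - 1 = 0 by ring, hC0] at this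
    have : 1 - C 1 * C 1 = 0 := by simpa using this
    linarith
  rcases mul_self_eq_one_iff.mp hE2 with h1 | h1
  · right
    intro k
    have hz : HasSum (fun k => p k - q k) 0 := by
      have := hsum.sub hqE
      rwa [h1, sub_self] at this
    have hnn : ∀ k, 0 ≤ p k - q k := by
      intro k
      rcases Nat.even_or_odd k with hk | hk
      · simp [hqdef, hk.neg_one_pow]
      · have := hp k
        simp [hqdef, hk.neg_one_pow]; linarith
    have hall := (hasSum_zero_iff_of_nonneg hnn).mp hz
    have := congrFun hall (2 * k + 1)
    have hodd : ((-1 : ℝ)) ^ (2 * k + 1) = -1 := Odd.neg_one_pow ⟨k, by ring⟩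
    simp [hqdef, hodd] at this
    linarith
  · left
    intro m
    have hz : HasSum (fun k => p k + q k) 0 := by
      have := hsum.add hqE
      rwa [h1, add_neg_cancel] at this
    have hnn : ∀ k, 0 ≤ p k + q k := by
      intro k
      rcases Nat.even_or_odd k with hk | hk
      · have := hp k
        simp [hqdef, hk.neg_one_pow]; linarith
      · simp [hqdef, hk.neg_one_pow]
    have hall := (hasSum_zero_iff_of_nonneg hnn).mp hz
    have := congrFun hall (2 * m)
    have heven : ((-1 : ℝ)) ^ (2 * m) = 1 := Even.neg_one_pow ⟨m, by ring⟩
    simp [hqdef, heven] at this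
    linarith
end

section
/- The eigenvalues of the conditioned covariance operator interlace strictly with those of the generator: with (a_{(n)})ₙ the strictly decreasing enumeration of the distinct positive values of (aₙ), no eigenvalue ã of the operator with kernel R(s,t) = C̃(t−s) − C̃(s)C̃(t)/C̃(0) exceeds a_{(1)} = max aₙ, where C̃(δ) = a₀ + 2Σ aₙ cos(2nπδ), aₙ ≥ 0, a₀ + 2Σ aₙ = 1. -/
open Real MeasureTheory intervalIntegral Set
open scoped ENNReal NNReal

section aux
variable (f : ℝ → ℝ)

lemma parseval_aux (hf : ContinuousOn f (Set.Icc 0 1)) :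
    Summable (fun n : ℤ => (∫ x in (0:ℝ)..1, Real.cos (2*π*n*x) * f x)^2
        + (∫ x in (0:ℝ)..1, Real.sin (2*π*n*x) * f x)^2)
    ∧ ∑' n : ℤ, ((∫ x in (0:ℝ)..1, Real.cos (2*π*n*x) * f x)^2
        + (∫ x in (0:ℝ)..1, Real.sin (2*π*n*x) * f x)^2)
      = ∫ x in (0:ℝ)..1, (f x)^2 := by
  haveI : Fact ((0:ℝ) < 1) := ⟨one_pos⟩
  set fc : ℝ → ℂ := fun t => (f t : ℂ) with hfc
  have hfcc : ContinuousOn fc (Set.Icc 0 1) :=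
    Complex.continuous_ofReal.comp_continuousOn hf
  obtain ⟨M, hM⟩ := (isCompact_Icc).exists_bound_of_continuousOn hfcc
  set g : AddCircle (1:ℝ) → ℂ := AddCircle.liftIoc (1:ℝ) 0 fc with hg
  have hgmeas : Measurable g := by
    have h1 : Measurable ((Set.Ioc (0:ℝ) (0+1)).restrict fc) := by
      have : ContinuousOn fc (Set.Ioc (0:ℝ) (0+1)) := by
        apply hfcc.mono; rw [zero_add]; exact Set.Ioc_subset_Icc_self
      exact (continuousOn_iff_continuous_restrict.mp this).measurable
    exact h1.comp (AddCircle.measurableEquivIoc (1:ℝ) 0).measurable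
  have hgb : ∀ x, ‖g x‖ ≤ max M 0 := by
    intro x
    rw [hg, AddCircle.liftIoc]
    set y := (AddCircle.equivIoc (1:ℝ) 0) x with hy
    have hy2 : (y:ℝ) ∈ Set.Icc (0:ℝ) 1 := by
      have h2 := y.2
      exact ⟨h2.1.le, by simpa using h2.2⟩
    exact le_max_of_le_left (hM _ hy2)
  have hmem : MemLp g 2 AddCircle.haarAddCircle :=
    MemLp.of_bound hgmeas.aestronglyMeasurable _ (Filter.Eventually.of_forall hgb)
  set F := hmem.toLp g with hF
  have key1 : ∀ n : ℤ, fourierCoeff (⇑F) n = fourierCoeff g n := by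
    intro n
    apply MeasureTheory.integral_congr_ae
    filter_upwards [hmem.coeFn_toLp] with x hx
    rw [hx]
  have key2 : ∀ n : ℤ, fourierCoeff g n =
      (↑(∫ x in (0:ℝ)..1, Real.cos (2*π*n*x) * f x) : ℂ)
        - (↑(∫ x in (0:ℝ)..1, Real.sin (2*π*n*x) * f x) : ℂ) * Complex.I := by
    intro n
    rw [fourierCoeff_eq_intervalIntegral g n 0]
    have e1 : ∫ x in (0:ℝ)..(0+1), (fourier (-n) (↑x : AddCircle (1:ℝ))) • g x
        = ∫ x in (0:ℝ)..1, (fourier (-n) (↑x : AddCircle (1:ℝ))) • fc x := by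
      rw [zero_add]
      refine intervalIntegral.integral_congr_ae (MeasureTheory.ae_of_all _ fun x hx => ?_)
      rw [Set.uIoc_of_le (zero_le_one)] at hx
      have hx' : x ∈ Set.Ioc (0:ℝ) (0+1) := by simpa using hx
      rw [hg, AddCircle.liftIoc_coe_apply hx']
    rw [e1]
    have e2 : ∀ x : ℝ, (fourier (-n) (↑x : AddCircle (1:ℝ))) • fc x
        = (↑(Real.cos (2*π*n*x) * f x) : ℂ) - (↑(Real.sin (2*π*n*x) * f x) : ℂ) * Complex.I := by
      intro x
      rw [fourier_coe_apply (T := 1)]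
      have e3 : 2 * ↑π * Complex.I * ↑(-n) * ↑x / ↑(1:ℝ) = ((-(2*π*n*x) : ℝ) : ℂ) * Complex.I := by
        push_cast; ring
      rw [e3, Complex.exp_mul_I, smul_eq_mul]
      rw [← Complex.ofReal_cos, ← Complex.ofReal_sin]
      rw [Real.cos_neg, Real.sin_neg]
      push_cast
      ring
    simp_rw [e2]
    have i1 : IntervalIntegrable (fun x => (↑(Real.cos (2*π*n*x) * f x) : ℂ)) volume 0 1 := by
      apply ContinuousOn.intervalIntegrable
      rw [Set.uIcc_of_le zero_le_one]
      exact Complex.continuous_ofReal.comp_continuousOn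
        (((Real.continuous_cos.comp (by continuity)).continuousOn).mul hf)
    have i2 : IntervalIntegrable (fun x => (↑(Real.sin (2*π*n*x) * f x) : ℂ) * Complex.I) volume 0 1 := by
      apply ContinuousOn.intervalIntegrable
      rw [Set.uIcc_of_le zero_le_one]
      exact (Complex.continuous_ofReal.comp_continuousOn
        (((Real.continuous_sin.comp (by continuity)).continuousOn).mul hf)).mul continuousOn_const
    rw [intervalIntegral.integral_sub i1 i2, intervalIntegral.integral_mul_const,
      intervalIntegral.integral_ofReal, intervalIntegral.integral_ofReal]
    simp
  have key3 : ∀ n : ℤ, ‖fourierCoeff g n‖^2 =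
      (∫ x in (0:ℝ)..1, Real.cos (2*π*n*x) * f x)^2
        + (∫ x in (0:ℝ)..1, Real.sin (2*π*n*x) * f x)^2 := by
    intro n
    rw [key2 n]
    rw [Complex.sq_norm, Complex.normSq_apply]
    simp
    ring
  have key4 : (∫ t : AddCircle (1:ℝ), ‖F t‖^2 ∂AddCircle.haarAddCircle) = ∫ x in (0:ℝ)..1, (f x)^2 := by
    have e1 : (∫ t : AddCircle (1:ℝ), ‖F t‖^2 ∂AddCircle.haarAddCircle)
        = ∫ t : AddCircle (1:ℝ), ‖g t‖^2 ∂AddCircle.haarAddCircle := by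
      apply MeasureTheory.integral_congr_ae
      filter_upwards [hmem.coeFn_toLp] with x hx
      rw [hx]
    have e2 : (volume : Measure (AddCircle (1:ℝ))) = AddCircle.haarAddCircle := by
      rw [AddCircle.volume_eq_smul_haarAddCircle]
      simp
    have e3 := AddCircle.intervalIntegral_preimage (1:ℝ) 0 (fun t => ‖g t‖^2)
    rw [e1, ← e2, ← e3, zero_add]
    refine intervalIntegral.integral_congr_ae (MeasureTheory.ae_of_all _ fun x hx => ?_)
    rw [Set.uIoc_of_le (zero_le_one)] at hx
    have hx' : x ∈ Set.Ioc (0:ℝ) (0+1) := by simpa using hx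
    rw [hg, AddCircle.liftIoc_coe_apply hx']
    simp [hfc, sq_abs]
  have hsummable : Summable (fun n : ℤ => ‖fourierCoeff (⇑F) n‖^2) := by
    have h1 := (lp.memℓp (fourierBasis.repr F)).summable (by norm_num)
    have h2 : ∀ i : ℤ, ‖fourierBasis.repr F i‖ ^ ENNReal.toReal 2 = ‖fourierCoeff (⇑F) i‖^2 := by
      intro i
      rw [fourierBasis_repr]
      norm_num
    exact h1.congr h2
  have parseval := tsum_sq_fourierCoeff F
  constructor
  · refine hsummable.congr fun n => ?_
    rw [← key3 n, key1 n]
  · rw [← key4, ← parseval]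
    apply tsum_congr
    intro n
    rw [key1 n, key3 n]

end aux

lemma sq_integral_pos (f : ℝ → ℝ) (hf : ContinuousOn f (Set.Icc 0 1))
    (hf0 : ∃ t ∈ Set.Icc (0:ℝ) 1, f t ≠ 0) :
    0 < ∫ t in (0:ℝ)..1, (f t)^2 := by
  obtain ⟨t₀, ht₀, hft₀⟩ := hf0
  have hsq : ContinuousOn (fun t => (f t)^2) (Set.Icc 0 1) := hf.pow 2
  have hint : IntegrableOn (fun t => (f t)^2) (Set.Ioc 0 1) :=
    (hsq.integrableOn_Icc).mono_set Set.Ioc_subset_Icc_self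
  rw [intervalIntegral.integral_of_le zero_le_one]
  rw [setIntegral_pos_iff_support_of_nonneg_ae
    (Filter.Eventually.of_forall fun t => sq_nonneg (f t)) hint]
  -- find ε ball where f ≠ 0
  have hev : {t : ℝ | f t ≠ 0} ∈ nhdsWithin t₀ (Set.Icc 0 1) :=
    (hf t₀ ht₀) (isOpen_compl_singleton.mem_nhds hft₀)
  rw [Metric.mem_nhdsWithin_iff] at hev
  obtain ⟨ε, hε, hball⟩ := hev
  set lo := max 0 (t₀ - ε) with hlo
  set hi := min 1 (t₀ + ε) with hhi
  have hlohi : lo < hi := by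
    rw [hlo, hhi]
    apply max_lt <;> apply lt_min
    · exact one_pos
    · linarith [ht₀.1]
    · linarith [ht₀.2]
    · linarith
  have hsub : Set.Ioo lo hi ⊆ Function.support (fun t => (f t)^2) ∩ Set.Ioc 0 1 := by
    intro t ht
    have h0 : 0 < t := lt_of_le_of_lt (le_max_left _ _) ht.1
    have h1 : t ≤ 1 := le_of_lt (lt_of_lt_of_le ht.2 (min_le_left _ _))
    have htIcc : t ∈ Set.Icc (0:ℝ) 1 := ⟨h0.le, h1⟩
    have hdist : dist t t₀ < ε := by
      rw [Real.dist_eq, abs_lt]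
      constructor
      · have := lt_of_le_of_lt (le_max_right 0 (t₀ - ε)) ht.1; linarith
      · have := lt_of_lt_of_le ht.2 (min_le_right 1 (t₀ + ε)); linarith
    have : f t ≠ 0 := hball ⟨hdist, htIcc⟩
    exact ⟨pow_ne_zero 2 this, h0, h1⟩
  calc (0:ℝ≥0∞) < volume (Set.Ioo lo hi) := by
        rw [Real.volume_Ioo]; simp [hlohi]
    _ ≤ volume (Function.support (fun t => (f t)^2) ∩ Set.Ioc 0 1) := measure_mono hsub

lemma tsum_intervalIntegral_swap (G : ℕ → ℝ → ℝ)
    (hGi : ∀ k, IntervalIntegrable (G k) volume 0 1)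
    (bound : ℕ → ℝ) (hbound : ∀ k, ∀ t ∈ Set.Ioc (0:ℝ) 1, |G k t| ≤ bound k)
    (hbs : Summable bound) :
    ∑' k, ∫ t in (0:ℝ)..1, G k t = ∫ t in (0:ℝ)..1, ∑' k, G k t := by
  have h1 : ∀ k, Integrable (G k) (volume.restrict (Set.Ioc (0:ℝ) 1)) := fun k => (hGi k).1
  have h2 : Summable fun k => ∫ t, ‖G k t‖ ∂(volume.restrict (Set.Ioc (0:ℝ) 1)) := by
    apply Summable.of_nonneg_of_le (fun k => integral_nonneg fun t => norm_nonneg _) _ hbs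
    intro k
    have : ∫ t, ‖G k t‖ ∂(volume.restrict (Set.Ioc (0:ℝ) 1))
        ≤ ∫ _t, bound k ∂(volume.restrict (Set.Ioc (0:ℝ) 1)) := by
      apply integral_mono_ae (h1 k).norm (integrable_const _)
      filter_upwards [ae_restrict_mem measurableSet_Ioc] with t ht
      simpa using hbound k t ht
    simpa using this.trans (by simp)
  simp_rw [intervalIntegral.integral_of_le (zero_le_one (α := ℝ))]
  exact integral_tsum_of_summable_integral_norm h1 h2

lemma cos_shift_integral (f : ℝ → ℝ) (hf : ContinuousOn f (Set.Icc 0 1)) (m s : ℝ) :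
    ∫ t in (0:ℝ)..1, Real.cos (2*π*m*(t - s)) * f t
      = (Real.cos (2*π*m*s) * ∫ t in (0:ℝ)..1, Real.cos (2*π*m*t) * f t)
        + Real.sin (2*π*m*s) * ∫ t in (0:ℝ)..1, Real.sin (2*π*m*t) * f t := by
  have key : ∀ t, Real.cos (2*π*m*(t - s)) * f t
      = Real.cos (2*π*m*s) * (Real.cos (2*π*m*t) * f t)
        + Real.sin (2*π*m*s) * (Real.sin (2*π*m*t) * f t) := by
    intro t
    have : (2*π*m*(t-s)) = 2*π*m*t - 2*π*m*s := by ring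
    rw [this, Real.cos_sub]
    ring
  have icos : IntervalIntegrable (fun t => Real.cos (2*π*m*t) * f t) volume 0 1 := by
    apply ContinuousOn.intervalIntegrable
    rw [Set.uIcc_of_le zero_le_one]
    exact ((Real.continuous_cos.comp (by continuity)).continuousOn).mul hf
  have isin : IntervalIntegrable (fun t => Real.sin (2*π*m*t) * f t) volume 0 1 := by
    apply ContinuousOn.intervalIntegrable
    rw [Set.uIcc_of_le zero_le_one]
    exact ((Real.continuous_sin.comp (by continuity)).continuousOn).mul hf
  rw [intervalIntegral.integral_congr (g := fun t => Real.cos (2*π*m*s) * (Real.cos (2*π*m*t) * f t)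
        + Real.sin (2*π*m*s) * (Real.sin (2*π*m*t) * f t)) (fun t _ => key t)]
  rw [intervalIntegral.integral_add (icos.const_mul _) (isin.const_mul _),
    intervalIntegral.integral_const_mul, intervalIntegral.integral_const_mul]


open Real intervalIntegral

set_option maxHeartbeats 2000000 in
/-- No eigenvalue of the conditioned covariance operator with kernel
`R(s,t) = C̃(t-s) - C̃(s)C̃(t)` (where `C̃(0) = 1`) exceeds `max aₙ`. -/
theorem conditioned_eigenvalues_bounded_by_max
    (a : ℕ → ℝ) (ha : ∀ n, 0 ≤ a n) (hsum : Summable a)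
    (hnorm : a 0 + 2 * ∑' n : ℕ, a (n + 1) = 1)
    (C : ℝ → ℝ)
    (hC : ∀ δ : ℝ, C δ = a 0 + 2 * ∑' n : ℕ, a (n + 1) * Real.cos (2 * (n + 1) * Real.pi * δ))
    (R : ℝ → ℝ → ℝ)
    (hR : ∀ s t : ℝ, R s t = C (t - s) - C s * C t)
    (atilde : ℝ) (hatilde : 0 < atilde)
    (f : ℝ → ℝ) (hf : ContinuousOn f (Set.Icc 0 1))
    (hf0 : ∃ t ∈ Set.Icc (0:ℝ) 1, f t ≠ 0)
    (heig : ∀ s ∈ Set.Icc (0:ℝ) 1, ∫ t in (0:ℝ)..1, R s t * f t = atilde * f s) :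
    atilde ≤ ⨆ n : ℕ, a n := by
  -- basic integrability facts
  have hfint : IntervalIntegrable f volume 0 1 := by
    apply ContinuousOn.intervalIntegrable
    rwa [Set.uIcc_of_le zero_le_one]
  obtain ⟨M, hM⟩ := isCompact_Icc.exists_bound_of_continuousOn hf
  have hM0 : 0 ≤ M := le_trans (norm_nonneg _) (hM 0 ⟨le_refl _, zero_le_one⟩)
  have intCF : ∀ g : ℝ → ℝ, Continuous g →
      IntervalIntegrable (fun t => g t * f t) volume 0 1 := by
    intro g hg
    apply ContinuousOn.intervalIntegrable
    rw [Set.uIcc_of_le zero_le_one]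
    exact hg.continuousOn.mul hf
  have hb : Summable (fun k => a (k+1)) := by
    have h : (fun k => a (k+1)) = a ∘ (fun k => k + 1) := rfl
    rw [h]
    exact hsum.comp_injective (add_left_injective 1)
  have hbps : ∀ k : ℕ, ∑' n : ℕ, a (n+1) ≥ a (k+1) :=
    fun k => Summable.le_tsum hb k (fun j _ => ha (j+1))
  -- continuity of C
  have hCcont : Continuous C := by
    have hCeq : C = fun δ => a 0 + 2 * ∑' n : ℕ, a (n + 1) * Real.cos (2 * (n + 1) * π * δ) :=
      funext hC
    rw [hCeq]
    refine continuous_const.add (continuous_const.mul ?_)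
    refine continuous_tsum (fun k => ?_) hb (fun k x => ?_)
    · exact continuous_const.mul (Real.continuous_cos.comp (by continuity))
    · rw [norm_mul]
      calc ‖a (k+1)‖ * ‖Real.cos (2 * (↑k + 1) * π * x)‖
          ≤ a (k+1) * 1 := by
            apply mul_le_mul
            · rw [Real.norm_eq_abs, abs_of_nonneg (ha (k+1))]
            · rw [Real.norm_eq_abs]; exact Real.abs_cos_le_one _
            · exact norm_nonneg _
            · exact ha (k+1)
        _ = a (k+1) := mul_one _
  -- coefficients
  set cN : ℝ → ℝ := fun m => ∫ t in (0:ℝ)..1, Real.cos (2*π*m*t) * f t with hcN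
  set sN : ℝ → ℝ := fun m => ∫ t in (0:ℝ)..1, Real.sin (2*π*m*t) * f t with hsN
  set B : ℝ := ∫ t in (0:ℝ)..1, |f t| with hB
  have hB0 : 0 ≤ B := by
    rw [hB]
    exact intervalIntegral.integral_nonneg zero_le_one (fun t _ => abs_nonneg _)
  have habs : ∀ g : ℝ → ℝ, Continuous g → (∀ t, |g t| ≤ 1) →
      |∫ t in (0:ℝ)..1, g t * f t| ≤ B := by
    intro g hg hg1
    calc |∫ t in (0:ℝ)..1, g t * f t| ≤ ∫ t in (0:ℝ)..1, |g t * f t| :=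
          intervalIntegral.abs_integral_le_integral_abs zero_le_one
      _ ≤ ∫ t in (0:ℝ)..1, |f t| := by
          apply intervalIntegral.integral_mono_on zero_le_one (intCF g hg).abs hfint.abs
          intro t _
          rw [abs_mul]
          nlinarith [abs_nonneg (f t), hg1 t, abs_nonneg (g t)]
      _ = B := hB.symm
  have hcsb : ∀ m : ℝ, |cN m| ≤ B ∧ |sN m| ≤ B := by
    intro m
    have hlin : Continuous (fun t : ℝ => 2*π*m*t) := continuous_const.mul continuous_id
    constructor
    · simp only [hcN]
      exact habs _ (Real.continuous_cos.comp hlin) (fun t => Real.abs_cos_le_one _)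
    · simp only [hsN]
      exact habs _ (Real.continuous_sin.comp hlin) (fun t => Real.abs_sin_le_one _)
  have hcN0 : (∫ t in (0:ℝ)..1, f t) = cN 0 := by
    rw [hcN]
    apply intervalIntegral.integral_congr
    intro t _
    simp
  have hsN0 : sN 0 = 0 := by
    rw [hsN]
    simp
  set I : ℝ := ∫ t in (0:ℝ)..1, (f t)^2 with hI
  have hIpos : 0 < I := sq_integral_pos f hf hf0
  -- the series part of the inner integral
  set P : ℝ → ℝ := fun s => ∑' k : ℕ, 2 * a (k+1) *
    (Real.cos (2*π*((k:ℝ)+1)*s) * cN ((k:ℝ)+1) + Real.sin (2*π*((k:ℝ)+1)*s) * sN ((k:ℝ)+1)) with hP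
  have hPc : Continuous P := by
    rw [hP]
    refine continuous_tsum (fun k => ?_) ((hb.mul_left 2).mul_right (B+B)) (fun k x => ?_)
    · apply continuous_const.mul
      have hlin : Continuous (fun s : ℝ => 2*π*((k:ℝ)+1)*s) := continuous_const.mul continuous_id
      exact ((Real.continuous_cos.comp hlin).mul continuous_const).add
        ((Real.continuous_sin.comp hlin).mul continuous_const)
    · rw [norm_mul]
      have h1 : ‖Real.cos (2*π*((k:ℝ)+1)*x) * cN ((k:ℝ)+1)
          + Real.sin (2*π*((k:ℝ)+1)*x) * sN ((k:ℝ)+1)‖ ≤ B + B := by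
        rw [Real.norm_eq_abs]
        calc |Real.cos (2*π*((k:ℝ)+1)*x) * cN ((k:ℝ)+1)
            + Real.sin (2*π*((k:ℝ)+1)*x) * sN ((k:ℝ)+1)|
            ≤ |Real.cos (2*π*((k:ℝ)+1)*x) * cN ((k:ℝ)+1)|
              + |Real.sin (2*π*((k:ℝ)+1)*x) * sN ((k:ℝ)+1)| := abs_add_le _ _
          _ ≤ B + B := by
              rw [abs_mul, abs_mul]
              have hc := (hcsb ((k:ℝ)+1)).1
              have hs := (hcsb ((k:ℝ)+1)).2
              have h2 := Real.abs_cos_le_one (2*π*((k:ℝ)+1)*x)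
              have h3 := Real.abs_sin_le_one (2*π*((k:ℝ)+1)*x)
              have h4 := abs_nonneg (cN ((k:ℝ)+1))
              have h5 := abs_nonneg (sN ((k:ℝ)+1))
              have h6 := abs_nonneg (Real.cos (2*π*((k:ℝ)+1)*x))
              have h7 := abs_nonneg (Real.sin (2*π*((k:ℝ)+1)*x))
              have : |cN ((k:ℝ)+1)| ≤ B := hc
              nlinarith
      have h2 : ‖(2:ℝ) * a (k+1)‖ = 2 * a (k+1) := by
        rw [Real.norm_eq_abs, abs_of_nonneg (mul_nonneg two_pos.le (ha (k+1)))]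
      rw [h2]
      exact mul_le_mul_of_nonneg_left h1 (mul_nonneg two_pos.le (ha (k+1)))
  set A : ℝ → ℝ := fun s => ∫ t in (0:ℝ)..1, C (t - s) * f t with hA
  have h_inner : ∀ s : ℝ, A s = a 0 * cN 0 + P s := by
    intro s
    set G : ℕ → ℝ → ℝ :=
      fun k t => 2 * a (k+1) * (Real.cos (2*π*((k:ℝ)+1)*(t-s)) * f t) with hG
    have hpt : ∀ t, C (t - s) * f t = a 0 * f t + ∑' k, G k t := by
      intro t
      rw [hC (t-s), add_mul]
      congr 1
      calc (2 * ∑' k : ℕ, a (k+1) * Real.cos (2 * (↑k + 1) * π * (t - s))) * f t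
          = 2 * ((∑' k : ℕ, a (k+1) * Real.cos (2 * (↑k + 1) * π * (t - s))) * f t) := by ring
        _ = 2 * (∑' k : ℕ, a (k+1) * Real.cos (2 * (↑k + 1) * π * (t - s)) * f t) := by
            rw [tsum_mul_right]
        _ = ∑' k : ℕ, 2 * (a (k+1) * Real.cos (2 * (↑k + 1) * π * (t - s)) * f t) := by
            rw [tsum_mul_left]
        _ = ∑' k, G k t := by
            apply tsum_congr
            intro k
            rw [hG]
            have harg : 2 * ((k:ℝ) + 1) * π * (t - s) = 2*π*((k:ℝ)+1)*(t-s) := by ring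
            rw [harg]
            ring
    have hGi : ∀ k, IntervalIntegrable (G k) volume 0 1 := by
      intro k
      have hlin : Continuous (fun t : ℝ => 2*π*((k:ℝ)+1)*(t-s)) :=
        continuous_const.mul (continuous_id.sub continuous_const)
      exact (intCF _ (Real.continuous_cos.comp hlin)).const_mul _
    have hGb : ∀ k, ∀ t ∈ Set.Ioc (0:ℝ) 1, |G k t| ≤ 2 * a (k+1) * M := by
      intro k t ht
      have hft : |f t| ≤ M := by
        have := hM t (Set.Ioc_subset_Icc_self ht)
        rwa [Real.norm_eq_abs] at this
      rw [hG]
      rw [abs_mul, abs_mul, abs_mul, abs_two, abs_of_nonneg (ha (k+1))]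
      have hc := Real.abs_cos_le_one (2*π*((k:ℝ)+1)*(t-s))
      have h6 := abs_nonneg (Real.cos (2*π*((k:ℝ)+1)*(t-s)))
      have h7 := abs_nonneg (f t)
      nlinarith [ha (k+1), mul_le_mul hc hft h7 zero_le_one,
        mul_le_mul_of_nonneg_left (mul_le_mul hc hft h7 zero_le_one) (mul_nonneg two_pos.le (ha (k+1)))]
    have hbsum : Summable (fun k => 2 * a (k+1) * M) := (hb.mul_left 2).mul_right M
    have hswap := tsum_intervalIntegral_swap G hGi _ hGb hbsum
    have ha0f : IntervalIntegrable (fun t => a 0 * f t) volume 0 1 := hfint.const_mul _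
    have hCfi : IntervalIntegrable (fun t => C (t - s) * f t) volume 0 1 :=
      intCF _ (hCcont.comp (continuous_id.sub continuous_const))
    have htsum_i : IntervalIntegrable (fun t => ∑' k, G k t) volume 0 1 := by
      have heq2 : (fun t => ∑' k, G k t) = fun t => C (t - s) * f t - a 0 * f t := by
        funext t
        rw [hpt t]
        ring
      rw [heq2]
      exact hCfi.sub ha0f
    calc A s = ∫ t in (0:ℝ)..1, (a 0 * f t + ∑' k, G k t) := by
          simp only [hA]
          exact intervalIntegral.integral_congr (fun t _ => hpt t)
      _ = (∫ t in (0:ℝ)..1, a 0 * f t) + ∫ t in (0:ℝ)..1, (∑' k, G k t) :=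
          intervalIntegral.integral_add ha0f htsum_i
      _ = a 0 * cN 0 + ∑' k, ∫ t in (0:ℝ)..1, G k t := by
          rw [intervalIntegral.integral_const_mul, hcN0, ← hswap]
      _ = a 0 * cN 0 + P s := by
          congr 1
          simp only [hP]
          apply tsum_congr
          intro k
          simp only [hG]
          rw [intervalIntegral.integral_const_mul]
          rw [cos_shift_integral f hf ((k:ℝ)+1) s]
  set D : ℝ := ∫ s in (0:ℝ)..1, A s * f s with hD
  have h_outer : D = a 0 * (cN 0)^2
      + ∑' k : ℕ, 2 * a (k+1) * ((cN ((k:ℝ)+1))^2 + (sN ((k:ℝ)+1))^2) := by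
    set H : ℕ → ℝ → ℝ := fun k s => 2 * a (k+1) *
      ((Real.cos (2*π*((k:ℝ)+1)*s) * cN ((k:ℝ)+1)
        + Real.sin (2*π*((k:ℝ)+1)*s) * sN ((k:ℝ)+1)) * f s) with hH
    have hTc : ∀ k : ℕ, Continuous (fun s => Real.cos (2*π*((k:ℝ)+1)*s) * cN ((k:ℝ)+1)
        + Real.sin (2*π*((k:ℝ)+1)*s) * sN ((k:ℝ)+1)) := by
      intro k
      have hlin : Continuous (fun s : ℝ => 2*π*((k:ℝ)+1)*s) := continuous_const.mul continuous_id
      exact ((Real.continuous_cos.comp hlin).mul continuous_const).add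
        ((Real.continuous_sin.comp hlin).mul continuous_const)
    have hpt : ∀ s, A s * f s = (a 0 * cN 0) * f s + ∑' k, H k s := by
      intro s
      rw [h_inner s, add_mul]
      congr 1
      calc P s * f s = ∑' k : ℕ, (2 * a (k+1) *
          (Real.cos (2*π*((k:ℝ)+1)*s) * cN ((k:ℝ)+1)
            + Real.sin (2*π*((k:ℝ)+1)*s) * sN ((k:ℝ)+1))) * f s := by
            rw [hP, tsum_mul_right]
        _ = ∑' k, H k s := by
            apply tsum_congr
            intro k
            rw [hH]
            ring
    have hHi : ∀ k, IntervalIntegrable (H k) volume 0 1 := fun k =>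
      (intCF _ (hTc k)).const_mul _
    have hHb : ∀ k, ∀ t ∈ Set.Ioc (0:ℝ) 1, |H k t| ≤ 2 * a (k+1) * ((B + B) * M) := by
      intro k t ht
      have hft : |f t| ≤ M := by
        have := hM t (Set.Ioc_subset_Icc_self ht)
        rwa [Real.norm_eq_abs] at this
      rw [hH]
      rw [abs_mul, abs_mul, abs_mul, abs_two, abs_of_nonneg (ha (k+1))]
      have hc := (hcsb ((k:ℝ)+1)).1
      have hs := (hcsb ((k:ℝ)+1)).2
      have h2 := Real.abs_cos_le_one (2*π*((k:ℝ)+1)*t)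
      have h3 := Real.abs_sin_le_one (2*π*((k:ℝ)+1)*t)
      have habs1 : |Real.cos (2*π*((k:ℝ)+1)*t) * cN ((k:ℝ)+1)
          + Real.sin (2*π*((k:ℝ)+1)*t) * sN ((k:ℝ)+1)| ≤ B + B := by
        calc |Real.cos (2*π*((k:ℝ)+1)*t) * cN ((k:ℝ)+1)
            + Real.sin (2*π*((k:ℝ)+1)*t) * sN ((k:ℝ)+1)|
            ≤ |Real.cos (2*π*((k:ℝ)+1)*t) * cN ((k:ℝ)+1)|
              + |Real.sin (2*π*((k:ℝ)+1)*t) * sN ((k:ℝ)+1)| := abs_add_le _ _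
          _ ≤ B + B := by
              rw [abs_mul, abs_mul]
              have h4 := abs_nonneg (cN ((k:ℝ)+1))
              have h5 := abs_nonneg (sN ((k:ℝ)+1))
              have h6 := abs_nonneg (Real.cos (2*π*((k:ℝ)+1)*t))
              have h7 := abs_nonneg (Real.sin (2*π*((k:ℝ)+1)*t))
              nlinarith
      have hprod : |Real.cos (2*π*((k:ℝ)+1)*t) * cN ((k:ℝ)+1)
          + Real.sin (2*π*((k:ℝ)+1)*t) * sN ((k:ℝ)+1)| * |f t| ≤ (B + B) * M :=
        mul_le_mul habs1 hft (abs_nonneg _) (by linarith)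
      nlinarith [ha (k+1),
        mul_le_mul_of_nonneg_left hprod (mul_nonneg two_pos.le (ha (k+1)))]
    have hbsum : Summable (fun k => 2 * a (k+1) * ((B + B) * M)) :=
      (hb.mul_left 2).mul_right _
    have hswap := tsum_intervalIntegral_swap H hHi _ hHb hbsum
    have ha0f : IntervalIntegrable (fun s => (a 0 * cN 0) * f s) volume 0 1 :=
      hfint.const_mul _
    have hAfi : IntervalIntegrable (fun s => A s * f s) volume 0 1 := by
      have heq2 : (fun s => A s * f s) = fun s => (a 0 * cN 0 + P s) * f s := by
        funext s
        rw [h_inner s]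
      rw [heq2]
      exact intCF _ (continuous_const.add hPc)
    have htsum_i : IntervalIntegrable (fun s => ∑' k, H k s) volume 0 1 := by
      have heq2 : (fun s => ∑' k, H k s) = fun s => A s * f s - (a 0 * cN 0) * f s := by
        funext s
        rw [hpt s]
        ring
      rw [heq2]
      exact hAfi.sub ha0f
    calc D = ∫ s in (0:ℝ)..1, ((a 0 * cN 0) * f s + ∑' k, H k s) := by
          simp only [hD]
          exact intervalIntegral.integral_congr (fun s _ => hpt s)
      _ = (∫ s in (0:ℝ)..1, (a 0 * cN 0) * f s) + ∫ s in (0:ℝ)..1, (∑' k, H k s) :=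
          intervalIntegral.integral_add ha0f htsum_i
      _ = a 0 * (cN 0)^2 + ∑' k, ∫ s in (0:ℝ)..1, H k s := by
          rw [intervalIntegral.integral_const_mul, hcN0, ← hswap]
          congr 1
          ring
      _ = a 0 * (cN 0)^2
          + ∑' k : ℕ, 2 * a (k+1) * ((cN ((k:ℝ)+1))^2 + (sN ((k:ℝ)+1))^2) := by
          congr 1
          apply tsum_congr
          intro k
          simp only [hH]
          rw [intervalIntegral.integral_const_mul]
          congr 1
          have hsplit : ∀ s : ℝ, (Real.cos (2*π*((k:ℝ)+1)*s) * cN ((k:ℝ)+1)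
              + Real.sin (2*π*((k:ℝ)+1)*s) * sN ((k:ℝ)+1)) * f s
              = cN ((k:ℝ)+1) * (Real.cos (2*π*((k:ℝ)+1)*s) * f s)
                + sN ((k:ℝ)+1) * (Real.sin (2*π*((k:ℝ)+1)*s) * f s) := by
            intro s
            ring
          rw [intervalIntegral.integral_congr (fun s _ => hsplit s)]
          have hlin : Continuous (fun s : ℝ => 2*π*((k:ℝ)+1)*s) := continuous_const.mul continuous_id
          rw [intervalIntegral.integral_add
            ((intCF (fun s => Real.cos (2*π*((k:ℝ)+1)*s)) (Real.continuous_cos.comp hlin)).const_mul _)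
            ((intCF (fun s => Real.sin (2*π*((k:ℝ)+1)*s)) (Real.continuous_sin.comp hlin)).const_mul _),
            intervalIntegral.integral_const_mul, intervalIntegral.integral_const_mul]
          simp only [hcN, hsN]
          ring
  -- eigenvalue relation
  set J : ℝ := ∫ t in (0:ℝ)..1, C t * f t with hJ
  have hDeig : atilde * I = D - J^2 := by
    have hJint : IntervalIntegrable (fun t => C t * f t) volume 0 1 := intCF C hCcont
    have hAfi : IntervalIntegrable (fun s => A s * f s) volume 0 1 := by
      have heq2 : (fun s => A s * f s) = fun s => (a 0 * cN 0 + P s) * f s := by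
        funext s
        rw [h_inner s]
      rw [heq2]
      exact intCF _ (continuous_const.add hPc)
    have hRint : ∀ s : ℝ, (∫ t in (0:ℝ)..1, R s t * f t) = A s - C s * J := by
      intro s
      have h1 : ∀ t, R s t * f t = C (t - s) * f t - C s * (C t * f t) := by
        intro t
        rw [hR]
        ring
      rw [intervalIntegral.integral_congr (fun t (_ : t ∈ Set.uIcc 0 1) => h1 t)]
      rw [intervalIntegral.integral_sub
        (intCF (fun t => C (t - s)) (hCcont.comp (continuous_id.sub continuous_const)))
        (hJint.const_mul (C s)),
        intervalIntegral.integral_const_mul]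
    have h1 : Set.EqOn (fun s => atilde * (f s)^2) (fun s => (A s - C s * J) * f s)
        (Set.uIcc 0 1) := by
      intro s hs
      rw [Set.uIcc_of_le zero_le_one] at hs
      simp only
      rw [← hRint s, heig s hs]
      ring
    have h2 : ∀ s : ℝ, (A s - C s * J) * f s = A s * f s - J * (C s * f s) := by
      intro s
      ring
    calc atilde * I = ∫ s in (0:ℝ)..1, atilde * (f s)^2 := by
          rw [hI, intervalIntegral.integral_const_mul]
      _ = ∫ s in (0:ℝ)..1, (A s - C s * J) * f s := intervalIntegral.integral_congr h1
      _ = ∫ s in (0:ℝ)..1, (A s * f s - J * (C s * f s)) :=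
          intervalIntegral.integral_congr (fun s _ => h2 s)
      _ = (∫ s in (0:ℝ)..1, A s * f s) - J * ∫ s in (0:ℝ)..1, C s * f s := by
          rw [intervalIntegral.integral_sub hAfi (hJint.const_mul J),
            intervalIntegral.integral_const_mul]
      _ = D - J^2 := by
          rw [← hD, ← hJ]
          ring
  -- Parseval
  obtain ⟨hQsum, hQeq⟩ := parseval_aux f hf
  set QI : ℤ → ℝ := fun n => (∫ x in (0:ℝ)..1, Real.cos (2*π*(n:ℝ)*x) * f x)^2
    + (∫ x in (0:ℝ)..1, Real.sin (2*π*(n:ℝ)*x) * f x)^2 with hQI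
  set qk : ℕ → ℝ := fun k => (cN ((k:ℝ)+1))^2 + (sN ((k:ℝ)+1))^2 with hqk
  have hqknn : ∀ k, 0 ≤ qk k := fun k => add_nonneg (sq_nonneg _) (sq_nonneg _)
  have hQ' : ∀ n : ℤ, QI n = (cN ((n:ℝ)))^2 + (sN ((n:ℝ)))^2 := fun n => rfl
  have hcneg : ∀ m : ℝ, cN (-m) = cN m := by
    intro m
    simp only [hcN]
    apply intervalIntegral.integral_congr
    intro t _
    simp only [neg_mul, mul_neg, Real.cos_neg]
  have hsneg : ∀ m : ℝ, sN (-m) = -(sN m) := by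
    intro m
    simp only [hsN]
    rw [← intervalIntegral.integral_neg]
    apply intervalIntegral.integral_congr
    intro t _
    simp only [neg_mul, mul_neg, Real.sin_neg]
  have hQcast : ∀ k : ℕ, QI ((k:ℤ)+1) = qk k := by
    intro k
    rw [hQ']
    have h1 : (((k:ℤ)+1 : ℤ) : ℝ) = (k:ℝ)+1 := by push_cast; ring
    rw [h1]
  have hQcastneg : ∀ k : ℕ, QI (-((k:ℤ)+1)) = qk k := by
    intro k
    rw [hQ']
    have h1 : ((-((k:ℤ)+1) : ℤ) : ℝ) = -((k:ℝ)+1) := by push_cast; ring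
    rw [h1, hcneg, hsneg]
    simp only [hqk]
    ring
  have hinj1 : Function.Injective (fun k : ℕ => (k:ℤ)+1) := by
    intro x y h
    simpa using h
  have hinj2 : Function.Injective (fun n : ℕ => -((n:ℤ)+1)) := by
    intro x y h
    simpa using h
  have hqksum : Summable qk :=
    (hQsum.comp_injective hinj1).congr (fun k => hQcast k)
  have hIeq : I = (cN 0)^2 + 2 * ∑' k, qk k := by
    have hsum1 : Summable (fun n : ℕ => QI (n:ℤ)) := hQsum.comp_injective Nat.cast_injective
    have hsum2 : Summable (fun n : ℕ => QI (-((n:ℤ)+1))) := hQsum.comp_injective hinj2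
    have hsplit : ∑' n : ℤ, QI n = (∑' n : ℕ, QI ((n:ℕ):ℤ)) + ∑' n : ℕ, QI (-((n:ℤ)+1)) :=
      tsum_of_nat_of_neg_add_one hsum1 hsum2
    have hzero : ∑' n : ℕ, QI (n:ℤ) = QI ((0:ℕ):ℤ) + ∑' n : ℕ, QI ((n+1 : ℕ):ℤ) :=
      Summable.tsum_eq_zero_add hsum1
    have he1 : ∑' n : ℕ, QI (((n+1:ℕ)):ℤ) = ∑' k, qk k := by
      apply tsum_congr
      intro k
      have h2 : (((k+1:ℕ)):ℤ) = (k:ℤ)+1 := by push_cast; ring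
      rw [h2, hQcast]
    have he2 : ∑' n : ℕ, QI (-((n:ℤ)+1)) = ∑' k, qk k := tsum_congr fun k => hQcastneg k
    have hQ0 : QI ((0:ℕ):ℤ) = (cN 0)^2 := by
      rw [hQ']
      norm_num [hsN0]
    rw [hI, ← hQeq, hsplit, hzero, he1, he2, hQ0]
    ring
  -- sup bound
  set S : ℝ := ⨆ n : ℕ, a n with hS
  have hbdd : BddAbove (Set.range a) := by
    refine ⟨∑' n, a n, ?_⟩
    rintro x ⟨n, rfl⟩
    exact Summable.le_tsum hsum n (fun j _ => ha j)
  have haS : ∀ n, a n ≤ S := fun n => le_ciSup hbdd n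
  have hS0 : 0 ≤ S := le_trans (ha 0) (haS 0)
  -- final chain
  have hwsum : Summable (fun k => 2 * a (k+1) * qk k) := by
    apply Summable.of_nonneg_of_le
      (fun k => mul_nonneg (mul_nonneg two_pos.le (ha _)) (hqknn k))
      (fun k => ?_) ((hqksum.mul_left (2 * ∑' n : ℕ, a (n+1))))
    calc 2 * a (k+1) * qk k ≤ 2 * (∑' n : ℕ, a (n+1)) * qk k := by
          apply mul_le_mul_of_nonneg_right _ (hqknn k)
          have := hbps k
          nlinarith
      _ = 2 * (∑' n : ℕ, a (n+1)) * qk k := rfl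
  have hDle : D ≤ S * I := by
    rw [h_outer, hIeq]
    have h1 : a 0 * (cN 0)^2 ≤ S * (cN 0)^2 :=
      mul_le_mul_of_nonneg_right (haS 0) (sq_nonneg _)
    have h2 : ∑' k, 2 * a (k+1) * qk k ≤ ∑' k, S * (2 * qk k) := by
      apply Summable.tsum_le_tsum _ hwsum ((hqksum.mul_left 2).mul_left S)
      intro k
      calc 2 * a (k+1) * qk k = a (k+1) * (2 * qk k) := by ring
        _ ≤ S * (2 * qk k) :=
          mul_le_mul_of_nonneg_right (haS _) (mul_nonneg two_pos.le (hqknn k))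
    calc a 0 * cN 0 ^2 + ∑' k, 2 * a (k+1) * qk k
        ≤ S * cN 0^2 + ∑' k, S * (2 * qk k) := add_le_add h1 h2
      _ = S * cN 0^2 + S * (2 * ∑' k, qk k) := by
          rw [tsum_mul_left, tsum_mul_left]
      _ = S * (cN 0^2 + 2 * ∑' k, qk k) := by ring
  have hfinal : atilde * I ≤ S * I := by
    calc atilde * I = D - J^2 := hDeig
      _ ≤ D := by nlinarith [sq_nonneg J]
      _ ≤ S * I := hDle
  exact le_of_mul_le_mul_right hfinal hIpos
end

section
/- For every eigenfunction f of the kernel R(s,t) = C̃(t−s) − C̃(s)C̃(t)/C̃(0) with eigenvalue ã > 0 that is orthogonal to all sine eigenfunctions, the cosine coefficients satisfy f₀ + √2 Σ_{n=1}^∞ fₙᶜ = 0, where f₀ = ∫₀¹ f and fₙᶜ = ∫₀¹ f(τ)√2cos(2nπτ)dτ; equivalently f integrates to zero against the constant extension after renormalization. -/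
open Real intervalIntegral MeasureTheory

lemma intJ {c : ℝ} (hc : c ≠ 0) : ∫ s in (0:ℝ)..1, Real.cos (c * s) = Real.sin c / c := by
  rw [intervalIntegral.integral_comp_mul_left (f := Real.cos) hc]
  simp [div_eq_inv_mul]

lemma int_cos_int (k : ℤ) (hk : k ≠ 0) : ∫ s in (0:ℝ)..1, Real.cos (2 * k * π * s) = 0 := by
  have hk' : (k:ℝ) ≠ 0 := Int.cast_ne_zero.mpr hk
  have hc : (2 * (k:ℝ) * π) ≠ 0 := by
    have := Real.pi_ne_zero
    positivity
  rw [intJ hc]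
  have hs : Real.sin (2 * (k:ℝ) * π) = 0 := by
    have h := Real.sin_int_mul_pi (2 * k)
    push_cast at h
    exact h
  rw [hs, zero_div]

lemma int_cos_cos (k m : ℕ) :
    ∫ s in (0:ℝ)..1, Real.cos (2 * (k+1) * π * s) * Real.cos (2 * (m+1) * π * s)
      = if k = m then 1/2 else 0 := by
  have key : ∀ s : ℝ, Real.cos (2 * (k+1:ℝ) * π * s) * Real.cos (2 * (m+1:ℝ) * π * s)
      = (Real.cos ((2 * ((k:ℝ) - m) * π) * s) + Real.cos ((2 * ((k:ℝ)+m+2) * π) * s)) / 2 := by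
    intro s
    have h1 : (2 * ((k:ℝ) - m) * π) * s = 2 * ((k:ℝ)+1) * π * s - 2 * ((m:ℝ)+1) * π * s := by ring
    have h2 : (2 * ((k:ℝ) + m + 2) * π) * s = 2 * ((k:ℝ)+1) * π * s + 2 * ((m:ℝ)+1) * π * s := by
      ring
    rw [h1, h2, Real.cos_sub, Real.cos_add]; ring
  rw [intervalIntegral.integral_congr (g := fun s => (Real.cos ((2 * ((k:ℝ) - m) * π) * s)
      + Real.cos ((2 * ((k:ℝ)+m+2) * π) * s)) / 2) (fun s _ => key s)]
  have h2 : ∫ s in (0:ℝ)..1, Real.cos ((2 * ((k:ℝ)+m+2) * π) * s) = 0 := by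
    have h := int_cos_int (k+m+2) (by omega)
    push_cast at h
    exact h
  have hint : ∀ c : ℝ, IntervalIntegrable (fun s => Real.cos (c * s)) volume 0 1 :=
    fun c => (Real.continuous_cos.comp (continuous_const.mul continuous_id)).intervalIntegrable 0 1
  rw [intervalIntegral.integral_div, intervalIntegral.integral_add (hint _) (hint _), h2]
  by_cases hkm : k = m
  · subst hkm
    simp
  · have h1 : ∫ s in (0:ℝ)..1, Real.cos ((2 * ((k:ℝ) - m) * π) * s) = 0 := by
      have h := int_cos_int ((k:ℤ)-m) (by omega)
      push_cast at h
      exact h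
    simp [h1, hkm]

lemma int_cos_one (k : ℕ) : ∫ s in (0:ℝ)..1, Real.cos (2 * (k+1) * π * s) = 0 := by
  have h := int_cos_int (k+1) (by omega)
  push_cast at h
  exact h

lemma swap_tsum (F : ℕ → ℝ → ℝ) (b : ℕ → ℝ)
    (hF : ∀ n, IntegrableOn (F n) (Set.Ioc 0 1) volume)
    (hb : Summable b)
    (hbd : ∀ n, ∀ t ∈ Set.Ioc (0:ℝ) 1, |F n t| ≤ b n) :
    ∫ t in (0:ℝ)..1, ∑' n, F n t = ∑' n, ∫ t in (0:ℝ)..1, F n t := by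
  have hnorm : Summable fun n => ∫ t in Set.Ioc (0:ℝ) 1, ‖F n t‖ := by
    apply Summable.of_nonneg_of_le
      (fun n => integral_nonneg (fun t => norm_nonneg _)) _ hb
    intro n
    calc ∫ t in Set.Ioc (0:ℝ) 1, ‖F n t‖ ≤ ∫ _t in Set.Ioc (0:ℝ) 1, b n := by
          apply integral_mono_of_nonneg
          · exact Filter.Eventually.of_forall fun t => norm_nonneg _
          · exact integrableOn_const (by simp)
          · filter_upwards [ae_restrict_mem measurableSet_Ioc] with t ht
            exact hbd n t ht
      _ = b n := by simp
  have h := MeasureTheory.integral_tsum_of_summable_integral_norm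
    (F := F) (μ := volume.restrict (Set.Ioc (0:ℝ) 1)) hF hnorm
  rw [intervalIntegral.integral_of_le (by norm_num : (0:ℝ) ≤ 1)]
  rw [← h]
  congr 1
  ext n
  rw [intervalIntegral.integral_of_le (by norm_num : (0:ℝ) ≤ 1)]

/-- Every eigenfunction of the conditioned kernel `R(s,t) = C̃(t-s) - C̃(s)C̃(t)`
(with `C̃(0) = 1`) orthogonal to all sine eigenfunctions has cosine coefficients
satisfying `f₀ + √2 Σ_{n≥1} fₙᶜ = 0`. -/
theorem eigenfunction_cosine_coefficients_sum_zero
    (a : ℕ → ℝ) (ha : ∀ n, 0 ≤ a n) (hsum : Summable a)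
    (hnorm : a 0 + 2 * ∑' n : ℕ, a (n + 1) = 1)
    (C : ℝ → ℝ)
    (hC : ∀ δ : ℝ, C δ = a 0 + 2 * ∑' n : ℕ, a (n + 1) * Real.cos (2 * (n + 1) * Real.pi * δ))
    (R : ℝ → ℝ → ℝ)
    (hR : ∀ s t : ℝ, R s t = C (t - s) - C s * C t)
    (atilde : ℝ) (hat : 0 < atilde)
    (f : ℝ → ℝ) (hf : ContinuousOn f (Set.Icc 0 1))
    (heig : ∀ s ∈ Set.Icc (0:ℝ) 1, ∫ t in (0:ℝ)..1, R s t * f t = atilde * f s)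
    (horth : ∀ n : ℕ, 1 ≤ n →
      (∫ τ in (0:ℝ)..1, f τ * Real.sin (2 * n * Real.pi * τ)) = 0) :
    HasSum
      (fun n : ℕ => Real.sqrt 2 *
        ∫ τ in (0:ℝ)..1, f τ * (Real.sqrt 2 * Real.cos (2 * (n + 1) * Real.pi * τ)))
      (-(∫ τ in (0:ℝ)..1, f τ)) := by
  -- basic objects
  set c : ℕ → ℝ := fun n => ∫ τ in (0:ℝ)..1, f τ * Real.cos (2 * (n+1) * π * τ) with hc_def
  set f0 : ℝ := ∫ τ in (0:ℝ)..1, f τ with hf0_def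
  have hs1 : Summable (fun n => a (n+1)) := hsum.comp_injective (add_left_injective 1)
  obtain ⟨M, hM⟩ := isCompact_Icc.exists_bound_of_continuousOn hf
  have hM0 : 0 ≤ M := le_trans (norm_nonneg _) (hM 0 ⟨le_refl 0, zero_le_one⟩)
  -- integrability helpers
  have hII : ∀ g : ℝ → ℝ, Continuous g →
      IntervalIntegrable (fun t => f t * g t) volume 0 1 := by
    intro g hg
    apply ContinuousOn.intervalIntegrable
    rw [Set.uIcc_of_le zero_le_one]
    exact hf.mul hg.continuousOn
  have hfI : IntervalIntegrable f volume 0 1 := by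
    apply ContinuousOn.intervalIntegrable
    rw [Set.uIcc_of_le zero_le_one]; exact hf
  have hIOc2 : ∀ g : ℝ → ℝ, Continuous g →
      IntegrableOn (fun t => g t * f t) (Set.Ioc 0 1) volume :=
    fun g hg => ((hg.continuousOn.mul hf).integrableOn_Icc).mono_set Set.Ioc_subset_Icc_self
  have hII2 : ∀ g : ℝ → ℝ, Continuous g →
      IntervalIntegrable (fun t => g t * f t) volume 0 1 := by
    intro g hg
    apply ContinuousOn.intervalIntegrable
    rw [Set.uIcc_of_le zero_le_one]
    exact hg.continuousOn.mul hf
  -- bound on cosine coefficients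
  have hcbd : ∀ n, |c n| ≤ M := by
    intro n
    have h := intervalIntegral.norm_integral_le_of_norm_le_const
      (C := M) (f := fun τ => f τ * Real.cos (2 * (n+1:ℝ) * π * τ)) (a := 0) (b := 1) ?_
    · simpa using h
    · intro x hx
      rw [Set.uIoc_of_le zero_le_one] at hx
      have hfx := hM x (Set.Ioc_subset_Icc_self hx)
      calc ‖f x * Real.cos (2 * (n+1:ℝ) * π * x)‖ = ‖f x‖ * ‖Real.cos (2 * (n+1:ℝ) * π * x)‖ :=
            norm_mul _ _
        _ ≤ M * 1 := mul_le_mul hfx (Real.norm_eq_abs _ ▸ Real.abs_cos_le_one _)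
            (norm_nonneg _) hM0
        _ = M := mul_one M
  -- continuity of C
  have hCc : Continuous C := by
    rw [funext hC]
    apply Continuous.add continuous_const
    apply Continuous.mul continuous_const
    apply continuous_tsum (u := fun n => a (n+1)) ?_ hs1
    · intro n x
      rw [Real.norm_eq_abs, abs_mul, abs_of_nonneg (ha _)]
      exact mul_le_of_le_one_right (ha _) (Real.abs_cos_le_one _)
    · exact fun n => continuous_const.mul (Real.continuous_cos.comp (by fun_prop))
  -- the partial-sum function G
  have hsM : Summable (fun n => a (n+1) * M) := hs1.mul_right M
  have hGc : Continuous (fun s => ∑' n, a (n+1) * c n * Real.cos (2 * (n+1:ℝ) * π * s)) := by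
    apply continuous_tsum (u := fun n => a (n+1) * M) ?_ hsM
    · intro n x
      rw [Real.norm_eq_abs, abs_mul, abs_mul, abs_of_nonneg (ha _)]
      calc a (n+1) * |c n| * |Real.cos (2 * (n+1:ℝ) * π * x)| ≤ a (n+1) * M * 1 := by
            apply mul_le_mul (mul_le_mul le_rfl (hcbd n) (abs_nonneg _) (ha _))
              (Real.abs_cos_le_one _) (abs_nonneg _) (mul_nonneg (ha _) hM0)
        _ = a (n+1) * M := mul_one _
    · exact fun n => continuous_const.mul (Real.continuous_cos.comp (by fun_prop))
  -- key kernel expansion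
  have hK : ∀ s : ℝ, (∫ t in (0:ℝ)..1, C (t - s) * f t)
      = a 0 * f0 + 2 * ∑' n, a (n+1) * c n * Real.cos (2 * (n+1:ℝ) * π * s) := by
    intro s
    have hsplit : ∀ t : ℝ, C (t - s) * f t
        = a 0 * f t + (C (t - s) - a 0) * f t := by intro t; ring
    have htsum : ∀ t : ℝ, (C (t - s) - a 0) * f t
        = ∑' n, 2 * (a (n+1) * Real.cos (2 * (n+1:ℝ) * π * (t - s))) * f t := by
      intro t
      rw [hC (t - s), add_sub_cancel_left, ← tsum_mul_left, ← tsum_mul_right]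
    have hFint : ∀ n : ℕ, IntegrableOn
        (fun t => 2 * (a (n+1) * Real.cos (2 * (n+1:ℝ) * π * (t - s))) * f t)
        (Set.Ioc 0 1) volume :=
      fun n => hIOc2 (fun t => 2 * (a (n+1) * Real.cos (2 * (n+1:ℝ) * π * (t - s))))
        (by fun_prop)
    have hFbd : ∀ n : ℕ, ∀ t ∈ Set.Ioc (0:ℝ) 1,
        |2 * (a (n+1) * Real.cos (2 * (n+1:ℝ) * π * (t - s))) * f t| ≤ 2 * (a (n+1) * M) := by
      intro n t ht
      have hft : |f t| ≤ M := by
        have := hM t (Set.Ioc_subset_Icc_self ht); rwa [Real.norm_eq_abs] at this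
      rw [abs_mul, abs_mul, abs_mul, abs_two, abs_of_nonneg (ha _)]
      have h1 := Real.abs_cos_le_one (2 * (n+1:ℝ) * π * (t - s))
      have h2 := abs_nonneg (Real.cos (2 * (n+1:ℝ) * π * (t - s)))
      have h3 := abs_nonneg (f t)
      have h4 := ha (n+1)
      nlinarith [mul_le_mul h1 hft h3 zero_le_one,
        mul_nonneg h4 (mul_nonneg h2 h3)]
    have hFn : ∀ n : ℕ, (∫ t in (0:ℝ)..1,
        2 * (a (n+1) * Real.cos (2 * (n+1:ℝ) * π * (t - s))) * f t)
        = 2 * (a (n+1) * c n * Real.cos (2 * (n+1:ℝ) * π * s)) := by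
      intro n
      have hsin : (∫ τ in (0:ℝ)..1, f τ * Real.sin (2 * (n+1:ℝ) * π * τ)) = 0 := by
        have h := horth (n+1) (Nat.succ_le_succ (Nat.zero_le n))
        push_cast at h
        exact h
      have hexp : ∀ t : ℝ, 2 * (a (n+1) * Real.cos (2 * (n+1:ℝ) * π * (t - s))) * f t
          = (2 * a (n+1) * Real.cos (2 * (n+1:ℝ) * π * s)) *
              (f t * Real.cos (2 * (n+1:ℝ) * π * t))
            + (2 * a (n+1) * Real.sin (2 * (n+1:ℝ) * π * s)) *
              (f t * Real.sin (2 * (n+1:ℝ) * π * t)) := by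
        intro t
        have harg : 2 * (n+1:ℝ) * π * (t - s) = 2 * (n+1:ℝ) * π * t - 2 * (n+1:ℝ) * π * s := by
          ring
        rw [harg, Real.cos_sub]; ring
      rw [intervalIntegral.integral_congr (fun t _ => hexp t)]
      rw [intervalIntegral.integral_add
        ((hII (fun t => Real.cos (2 * (n+1:ℝ) * π * t)) (by fun_prop)).const_mul _)
        ((hII (fun t => Real.sin (2 * (n+1:ℝ) * π * t)) (by fun_prop)).const_mul _)]
      rw [intervalIntegral.integral_const_mul, intervalIntegral.integral_const_mul]
      rw [hsin]
      show 2 * a (n+1) * Real.cos (2 * (n+1:ℝ) * π * s) * c n + _ * 0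
        = 2 * (a (n+1) * c n * Real.cos (2 * (n+1:ℝ) * π * s))
      ring
    calc (∫ t in (0:ℝ)..1, C (t - s) * f t)
        = ∫ t in (0:ℝ)..1, (a 0 * f t + (C (t - s) - a 0) * f t) :=
          intervalIntegral.integral_congr (fun t _ => hsplit t)
      _ = a 0 * f0 + ∫ t in (0:ℝ)..1, (C (t - s) - a 0) * f t := by
          rw [intervalIntegral.integral_add (hfI.const_mul _)
            (hII2 (fun t => C (t - s) - a 0) ((hCc.comp (by fun_prop)).sub continuous_const))]
          rw [intervalIntegral.integral_const_mul]
      _ = a 0 * f0 + ∑' n, ∫ t in (0:ℝ)..1,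
            2 * (a (n+1) * Real.cos (2 * (n+1:ℝ) * π * (t - s))) * f t := by
          rw [intervalIntegral.integral_congr (fun t _ => htsum t)]
          rw [swap_tsum _ (fun n => 2 * (a (n+1) * M)) hFint ((hs1.mul_right M).mul_left 2) hFbd]
      _ = a 0 * f0 + 2 * ∑' n, a (n+1) * c n * Real.cos (2 * (n+1:ℝ) * π * s) := by
          rw [tsum_congr hFn, tsum_mul_left]
  -- integral of C against f, i.e. at s = 0
  have hI : (∫ t in (0:ℝ)..1, C t * f t) = a 0 * f0 + 2 * ∑' n, a (n+1) * c n := by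
    have h := hK 0
    simp only [sub_zero, mul_zero, Real.cos_zero, mul_one] at h
    exact h
  set I : ℝ := a 0 * f0 + 2 * ∑' n, a (n+1) * c n with hI_def
  -- pointwise identity for the eigenfunction
  have hP : ∀ s ∈ Set.Icc (0:ℝ) 1, atilde * f s
      = a 0 * f0 + 2 * (∑' n, a (n+1) * c n * Real.cos (2 * (n+1:ℝ) * π * s)) - C s * I := by
    intro s hs
    rw [← heig s hs]
    have hexp : ∀ t : ℝ, R s t * f t = C (t - s) * f t - C s * (C t * f t) := by
      intro t; rw [hR]; ring
    rw [intervalIntegral.integral_congr (fun t _ => hexp t)]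
    rw [intervalIntegral.integral_sub (hII2 (fun t => C (t - s)) (hCc.comp (by fun_prop)))
      ((hII2 C hCc).const_mul _)]
    rw [intervalIntegral.integral_const_mul, hK s, hI]
  have hCOcont : ∀ g : ℝ → ℝ, Continuous g → IntegrableOn g (Set.Ioc 0 1) volume :=
    fun g hg => (hg.continuousOn.integrableOn_Icc).mono_set Set.Ioc_subset_Icc_self
  -- integral of C
  have hCint : (∫ s in (0:ℝ)..1, C s) = a 0 := by
    have hsplitC : ∀ s : ℝ, C s = a 0 + ∑' n, 2 * (a (n+1) * Real.cos (2 * (n+1:ℝ) * π * s)) :=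
      fun s => by rw [hC s, ← tsum_mul_left]
    have hTc : Continuous (fun s : ℝ => ∑' n, 2 * (a (n+1) * Real.cos (2 * (n+1:ℝ) * π * s))) := by
      have heq : (fun s : ℝ => ∑' n, 2 * (a (n+1) * Real.cos (2 * (n+1:ℝ) * π * s)))
          = fun s => C s - a 0 := by
        funext s; rw [hC s, add_sub_cancel_left]; exact tsum_mul_left
      rw [heq]; exact hCc.sub continuous_const
    rw [intervalIntegral.integral_congr (fun s _ => hsplitC s)]
    rw [intervalIntegral.integral_add intervalIntegrable_const (hTc.intervalIntegrable 0 1)]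
    rw [swap_tsum (fun n s => 2 * (a (n+1) * Real.cos (2 * (n+1:ℝ) * π * s)))
      (fun n => 2 * a (n+1)) (fun n => hCOcont _ (by fun_prop)) (hs1.mul_left 2) ?_]
    · have hz : ∀ n : ℕ, (∫ s in (0:ℝ)..1, 2 * (a (n+1) * Real.cos (2 * (n+1:ℝ) * π * s))) = 0 := by
        intro n
        rw [intervalIntegral.integral_congr
          (g := fun s => (2 * a (n+1)) * Real.cos (2 * (n+1:ℝ) * π * s)) (fun s _ => by ring)]
        rw [intervalIntegral.integral_const_mul, int_cos_one n, mul_zero]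
      rw [tsum_congr hz, tsum_zero]
      simp
    · intro n sx _hs
      rw [abs_mul, abs_mul, abs_two, abs_of_nonneg (ha _)]
      exact mul_le_mul_of_nonneg_left
        (mul_le_of_le_one_right (ha _) (Real.abs_cos_le_one _)) (by norm_num)
  -- integral of C against a cosine
  have hCcos : ∀ m : ℕ, (∫ s in (0:ℝ)..1, C s * Real.cos (2 * (m+1:ℝ) * π * s)) = a (m+1) := by
    intro m
    have hsplit : ∀ s : ℝ, C s * Real.cos (2 * (m+1:ℝ) * π * s)
        = a 0 * Real.cos (2 * (m+1:ℝ) * π * s)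
          + ∑' n, 2 * a (n+1) *
              (Real.cos (2 * (n+1:ℝ) * π * s) * Real.cos (2 * (m+1:ℝ) * π * s)) := by
      intro s
      rw [hC s, add_mul, ← tsum_mul_left, ← tsum_mul_right]
      congr 1
      exact tsum_congr fun n => by ring
    have hTc : Continuous (fun s : ℝ => ∑' n, 2 * a (n+1) *
        (Real.cos (2 * (n+1:ℝ) * π * s) * Real.cos (2 * (m+1:ℝ) * π * s))) := by
      have heq : (fun s : ℝ => ∑' n, 2 * a (n+1) *
          (Real.cos (2 * (n+1:ℝ) * π * s) * Real.cos (2 * (m+1:ℝ) * π * s)))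
          = fun s => (C s - a 0) * Real.cos (2 * (m+1:ℝ) * π * s) := by
        funext s
        rw [hC s, add_sub_cancel_left, ← tsum_mul_left, ← tsum_mul_right]
        exact tsum_congr fun n => by ring
      rw [heq]
      exact (hCc.sub continuous_const).mul (by fun_prop)
    rw [intervalIntegral.integral_congr (fun s _ => hsplit s)]
    rw [intervalIntegral.integral_add
      ((show Continuous (fun s => a 0 * Real.cos (2 * (m+1:ℝ) * π * s)) from continuous_const.mul (by fun_prop)).intervalIntegrable 0 1) (hTc.intervalIntegrable 0 1)]
    rw [intervalIntegral.integral_const_mul, int_cos_one m, mul_zero, zero_add]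
    rw [swap_tsum (fun n s => 2 * a (n+1) *
        (Real.cos (2 * (n+1:ℝ) * π * s) * Real.cos (2 * (m+1:ℝ) * π * s)))
      (fun n => 2 * a (n+1)) (fun n => hCOcont _ (by fun_prop)) (hs1.mul_left 2) ?_]
    · rw [tsum_eq_single m ?_]
      · rw [intervalIntegral.integral_const_mul, int_cos_cos m m, if_pos rfl]
        ring
      · intro n hn
        rw [intervalIntegral.integral_const_mul, int_cos_cos n m, if_neg hn, mul_zero]
    · intro n sx _hs
      show _ ≤ 2 * a (n+1)
      rw [abs_mul, abs_mul, abs_mul, abs_two, abs_of_nonneg (ha _)]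
      have h1 := Real.abs_cos_le_one (2 * (n+1:ℝ) * π * sx)
      have h2 := Real.abs_cos_le_one (2 * (m+1:ℝ) * π * sx)
      have h3 := abs_nonneg (Real.cos (2 * (n+1:ℝ) * π * sx))
      have h4 := abs_nonneg (Real.cos (2 * (m+1:ℝ) * π * sx))
      exact mul_le_of_le_one_right (mul_nonneg (by norm_num) (ha _))
        (mul_le_one₀ h1 h4 h2)
  -- integral of G
  have hGbd : ∀ n : ℕ, ∀ sx : ℝ,
      |a (n+1) * c n * Real.cos (2 * (n+1:ℝ) * π * sx)| ≤ a (n+1) * M := by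
    intro n sx
    rw [abs_mul, abs_mul, abs_of_nonneg (ha _)]
    calc a (n+1) * |c n| * |Real.cos (2 * (n+1:ℝ) * π * sx)| ≤ a (n+1) * M * 1 :=
          mul_le_mul (mul_le_mul_of_nonneg_left (hcbd n) (ha _))
            (Real.abs_cos_le_one _) (abs_nonneg _) (mul_nonneg (ha _) hM0)
      _ = a (n+1) * M := mul_one _
  have hGint : (∫ s in (0:ℝ)..1, ∑' n, a (n+1) * c n * Real.cos (2 * (n+1:ℝ) * π * s)) = 0 := by
    rw [swap_tsum (fun n s => a (n+1) * c n * Real.cos (2 * (n+1:ℝ) * π * s))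
      (fun n => a (n+1) * M) (fun n => hCOcont _ (by fun_prop)) hsM
      (fun n sx _ => hGbd n sx)]
    have hz : ∀ n : ℕ, (∫ s in (0:ℝ)..1, a (n+1) * c n * Real.cos (2 * (n+1:ℝ) * π * s)) = 0 := by
      intro n
      rw [intervalIntegral.integral_const_mul, int_cos_one n, mul_zero]
    rw [tsum_congr hz, tsum_zero]
  have hGcos : ∀ m : ℕ, (∫ s in (0:ℝ)..1,
      (∑' n, a (n+1) * c n * Real.cos (2 * (n+1:ℝ) * π * s)) * Real.cos (2 * (m+1:ℝ) * π * s))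
      = a (m+1) * c m / 2 := by
    intro m
    have hsplit : ∀ s : ℝ,
        (∑' n, a (n+1) * c n * Real.cos (2 * (n+1:ℝ) * π * s)) * Real.cos (2 * (m+1:ℝ) * π * s)
        = ∑' n, a (n+1) * c n *
            (Real.cos (2 * (n+1:ℝ) * π * s) * Real.cos (2 * (m+1:ℝ) * π * s)) := by
      intro s
      rw [← tsum_mul_right]
      exact tsum_congr fun n => by ring
    rw [intervalIntegral.integral_congr (fun s _ => hsplit s)]
    rw [swap_tsum (fun n s => a (n+1) * c n *
        (Real.cos (2 * (n+1:ℝ) * π * s) * Real.cos (2 * (m+1:ℝ) * π * s)))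
      (fun n => a (n+1) * M) (fun n => hCOcont _ (by fun_prop)) hsM ?_]
    · rw [tsum_eq_single m ?_]
      · rw [intervalIntegral.integral_const_mul, int_cos_cos m m, if_pos rfl]
        ring
      · intro n hn
        rw [intervalIntegral.integral_const_mul, int_cos_cos n m, if_neg hn, mul_zero]
    · intro n sx _hs
      show _ ≤ a (n+1) * M
      have h2 := Real.abs_cos_le_one (2 * (m+1:ℝ) * π * sx)
      have h4 := abs_nonneg (Real.cos (2 * (m+1:ℝ) * π * sx))
      have h5 := hGbd n sx
      calc |a (n+1) * c n * (Real.cos (2 * (n+1:ℝ) * π * sx) * Real.cos (2 * (m+1:ℝ) * π * sx))|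
          = |a (n+1) * c n * Real.cos (2 * (n+1:ℝ) * π * sx)| *
              |Real.cos (2 * (m+1:ℝ) * π * sx)| := by
            rw [← abs_mul]; congr 1; ring
        _ ≤ (a (n+1) * M) * 1 :=
            mul_le_mul h5 h2 h4 (mul_nonneg (ha _) hM0)
        _ = a (n+1) * M := mul_one _
  -- coefficient equation for the constant term
  have hE0 : atilde * f0 = a 0 * f0 - a 0 * I := by
    have h := intervalIntegral.integral_congr (a := 0) (b := 1) (μ := volume)
      (f := fun s => atilde * f s)
      (g := fun s => a 0 * f0 + 2 * (∑' n, a (n+1) * c n * Real.cos (2 * (n+1:ℝ) * π * s))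
        - C s * I)
      (fun s hs => hP s (by rwa [Set.uIcc_of_le zero_le_one] at hs))
    rw [intervalIntegral.integral_const_mul] at h
    rw [intervalIntegral.integral_sub
      (intervalIntegrable_const.add ((show Continuous (fun s => 2 * ∑' n, a (n+1) * c n * Real.cos (2 * (n+1:ℝ) * π * s)) from continuous_const.mul hGc).intervalIntegrable 0 1))
      ((show Continuous (fun s => C s * I) from hCc.mul continuous_const).intervalIntegrable 0 1)] at h
    rw [intervalIntegral.integral_add intervalIntegrable_const
      ((show Continuous (fun s => 2 * ∑' n, a (n+1) * c n * Real.cos (2 * (n+1:ℝ) * π * s)) from continuous_const.mul hGc).intervalIntegrable 0 1)] at h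
    rw [intervalIntegral.integral_const, intervalIntegral.integral_const_mul, hGint,
      intervalIntegral.integral_mul_const, hCint, ← hf0_def] at h
    norm_num at h
    linear_combination h
  -- coefficient equations for the cosine terms
  have hEm : ∀ m : ℕ, atilde * c m = a (m+1) * c m - a (m+1) * I := by
    intro m
    have hmul : ∀ s ∈ Set.Icc (0:ℝ) 1,
        atilde * (f s * Real.cos (2 * (m+1:ℝ) * π * s))
        = (a 0 * f0) * Real.cos (2 * (m+1:ℝ) * π * s)
          + 2 * ((∑' n, a (n+1) * c n * Real.cos (2 * (n+1:ℝ) * π * s)) *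
              Real.cos (2 * (m+1:ℝ) * π * s))
          - (C s * Real.cos (2 * (m+1:ℝ) * π * s)) * I := by
      intro s hs
      have h := hP s hs
      have h2 : atilde * (f s * Real.cos (2 * (m+1:ℝ) * π * s))
          = (atilde * f s) * Real.cos (2 * (m+1:ℝ) * π * s) := by ring
      rw [h2, h]; ring
    have hint1a : IntervalIntegrable
        (fun s => (a 0 * f0) * Real.cos (2 * (m+1:ℝ) * π * s)) volume 0 1 :=
      (continuous_const.mul (by fun_prop)).intervalIntegrable 0 1
    have hint1b : IntervalIntegrable
        (fun s => 2 * ((∑' n, a (n+1) * c n * Real.cos (2 * (n+1:ℝ) * π * s)) *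
          Real.cos (2 * (m+1:ℝ) * π * s))) volume 0 1 :=
      (continuous_const.mul (hGc.mul (by fun_prop))).intervalIntegrable 0 1
    have hint2 : IntervalIntegrable
        (fun s => (C s * Real.cos (2 * (m+1:ℝ) * π * s)) * I) volume 0 1 :=
      ((hCc.mul (by fun_prop)).mul continuous_const).intervalIntegrable 0 1
    have h := intervalIntegral.integral_congr (a := 0) (b := 1) (μ := volume)
      (fun s hs => hmul s (by rwa [Set.uIcc_of_le zero_le_one] at hs))
    rw [intervalIntegral.integral_const_mul] at h
    rw [intervalIntegral.integral_sub (hint1a.add hint1b) hint2] at h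
    rw [intervalIntegral.integral_add hint1a hint1b] at h
    rw [intervalIntegral.integral_const_mul, int_cos_one m, mul_zero] at h
    rw [intervalIntegral.integral_const_mul, hGcos m] at h
    rw [intervalIntegral.integral_mul_const, hCcos m] at h
    have hcm : (∫ s in (0:ℝ)..1, f s * Real.cos (2 * (m+1:ℝ) * π * s)) = c m := by
      rw [hc_def]
    rw [hcm] at h
    linear_combination h
  -- summability of the coefficients
  have hs2 : Summable (fun n => a (n+1) * c n) := by
    refine Summable.of_norm (Summable.of_nonneg_of_le (fun n => norm_nonneg _)
      (fun n => ?_) hsM)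
    rw [Real.norm_eq_abs, abs_mul, abs_of_nonneg (ha _)]
    exact mul_le_mul le_rfl (hcbd n) (abs_nonneg _) (ha _)
  have hs3 : Summable c := by
    refine Summable.of_norm (Summable.of_nonneg_of_le (fun n => norm_nonneg _)
      (fun n => ?_) ((hs1.mul_right (M + |I|)).div_const atilde))
    have hcn : c n = (a (n+1) * (c n - I)) / atilde := by
      have h := hEm n
      field_simp
      linear_combination h
    have habs : |c n - I| ≤ M + |I| := by
      have h := norm_sub_le (c n) I
      simp only [Real.norm_eq_abs] at h
      linarith [hcbd n, h]
    show ‖c n‖ ≤ a (n+1) * (M + |I|) / atilde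
    rw [Real.norm_eq_abs, hcn, abs_div, abs_of_pos hat, abs_mul, abs_of_nonneg (ha _)]
    exact (div_le_div_iff_of_pos_right hat).mpr (mul_le_mul_of_nonneg_left habs (ha _))
  -- final assembly
  have hfun : (fun n : ℕ => Real.sqrt 2 *
      ∫ τ in (0:ℝ)..1, f τ * (Real.sqrt 2 * Real.cos (2 * (n+1:ℝ) * π * τ)))
      = fun n => 2 * c n := by
    funext n
    have hsplit : ∀ τ : ℝ, f τ * (Real.sqrt 2 * Real.cos (2 * (n+1:ℝ) * π * τ))
        = Real.sqrt 2 * (f τ * Real.cos (2 * (n+1:ℝ) * π * τ)) := fun τ => by ring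
    rw [intervalIntegral.integral_congr (fun τ _ => hsplit τ),
      intervalIntegral.integral_const_mul, ← mul_assoc,
      Real.mul_self_sqrt (by norm_num : (0:ℝ) ≤ 2)]
  rw [hfun]
  have hkey : atilde * (f0 + 2 * ∑' n, c n) = 0 := by
    have hsum_at : ∑' n, atilde * c n = atilde * ∑' n, c n := tsum_mul_left
    have e1 : ∑' n, atilde * c n = ∑' n, (a (n+1) * c n - a (n+1) * I) :=
      tsum_congr fun n => hEm n
    have e2 : ∑' n, (a (n+1) * c n - a (n+1) * I)
        = (∑' n, a (n+1) * c n) - (∑' n, a (n+1)) * I := by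
      rw [Summable.tsum_sub hs2 (hs1.mul_right I), tsum_mul_right]
    calc atilde * (f0 + 2 * ∑' n, c n) = atilde * f0 + 2 * (atilde * ∑' n, c n) := by ring
      _ = (a 0 * f0 - a 0 * I) + 2 * ((∑' n, a (n+1) * c n) - (∑' n, a (n+1)) * I) := by
          rw [← hsum_at, e1, e2, hE0]
      _ = (a 0 * f0 + 2 * ∑' n, a (n+1) * c n) - (a 0 + 2 * ∑' n, a (n+1)) * I := by ring
      _ = I - 1 * I := by rw [← hI_def, hnorm]
      _ = 0 := by ring
  have hzero : f0 + 2 * ∑' n, c n = 0 := by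
    rcases mul_eq_zero.mp hkey with h | h
    · exact absurd h (ne_of_gt hat)
    · exact h
  refine (Summable.hasSum_iff (hs3.mul_left 2)).mpr ?_
  rw [tsum_mul_left]
  linarith [hzero]
end
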